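/- For any tree T on n vertices, irr_T(T) ≤ (n²/4) · irr(T). -/

import Mathlib

open scoped Classical

/-- Albertson irregularity index: sum over edges of |deg u - deg v|. -/
noncomputable def albertson {V : Type*} [Fintype V] (G : SimpleGraph V) : ℤ :=
  ∑ e ∈ G.edgeFinset,
    Sym2.lift ⟨fun u v => |(G.degree u : ℤ) - (G.degree v : ℤ)|,
      fun u v => by simp [abs_sub_comm]⟩ e

/-- Sigma index: sum over edges of (deg u - deg v)^2. -/
noncomputable def sigmaIdx {V : Type*} [Fintype V] (G : SimpleGraph V) : ℤ :=
  ∑ e ∈ G.edgeFinset,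
    Sym2.lift ⟨fun u v => ((G.degree u : ℤ) - (G.degree v : ℤ))^2,
      fun u v => by ring⟩ e

/-- The star graph on `n` vertices: vertex 0 is the center, adjacent to all others. -/
def starGraph (n : ℕ) : SimpleGraph (Fin n) :=
  SimpleGraph.fromRel (fun u _ => u.val = 0)

/-- Caterpillar C(n,m): spine path x_1,...,x_n, each spine vertex with m pendant leaves. -/
def caterpillar (n m : ℕ) : SimpleGraph (Fin n ⊕ Fin n × Fin m) :=
  SimpleGraph.fromRel (fun a b =>
    match a, b with
    | Sum.inl i, Sum.inl j => (i : ℕ) + 1 = (j : ℕ)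
    | Sum.inl i, Sum.inr p => i = p.1
    | _, _ => False)

/-- Total irregularity: sum over all unordered pairs of distinct vertices of |deg u - deg v|. -/
noncomputable def totalIrr {V : Type*} [Fintype V] (G : SimpleGraph V) : ℤ :=
  ∑ e ∈ ({e : Sym2 V | ¬ e.IsDiag} : Set (Sym2 V)).toFinset,
    Sym2.lift ⟨fun u v => |(G.degree u : ℤ) - (G.degree v : ℤ)|,
      fun u v => by simp [abs_sub_comm]⟩ e

section AuxLemmas

open SimpleGraph

/-- Telescoping: along a walk, |f u - f v| is at most the sum of edge differences. -/
private lemma tele_walk {V : Type*} {G : SimpleGraph V} (f : V → ℤ)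
    (w : Sym2 V → ℤ) (hwk : ∀ x y : V, w s(x, y) = |f x - f y|) :
    ∀ {u v : V} (p : G.Walk u v), |f u - f v| ≤ (p.edges.map w).sum := by
  intro u v p
  induction p with
  | nil => simp
  | @cons u x v h q ih =>
    rw [SimpleGraph.Walk.edges_cons, List.map_cons, List.sum_cons, hwk]
    calc |f u - f v| ≤ |f u - f x| + |f x - f v| := abs_sub_le _ _ _
      _ ≤ |f u - f x| + (q.edges.map w).sum := by linarith
      _ = _ := rfl

/-- If a path contains the edge `s(a,b)`, then after deleting that edge the first
endpoint reaches one of `a, b` and the last endpoint reaches the other. -/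
private lemma split_walk {V : Type*} {G : SimpleGraph V} {a b : V} :
    ∀ {u v : V} (p : G.Walk u v), p.IsPath → s(a, b) ∈ p.edges →
      ((G.deleteEdges {s(a, b)}).Reachable u a ∧ (G.deleteEdges {s(a, b)}).Reachable v b) ∨
        ((G.deleteEdges {s(a, b)}).Reachable u b ∧ (G.deleteEdges {s(a, b)}).Reachable v a) := by
  intro u v p
  induction p with
  | nil => simp
  | @cons u x v h q ih =>
    intro hp he
    have hnodup := hp.isTrail.edges_nodup
    rw [SimpleGraph.Walk.edges_cons, List.nodup_cons] at hnodup
    rw [SimpleGraph.Walk.edges_cons, List.mem_cons] at he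
    have hq : q.IsPath := hp.of_cons
    rcases he with he | he
    · have hne : s(a, b) ∉ q.edges := by rw [he]; exact hnodup.1
      have hr : (G.deleteEdges {s(a, b)}).Reachable x v :=
        ⟨q.toDeleteEdges {s(a, b)} (fun e' he' => by
          simp only [Set.mem_singleton_iff]
          rintro rfl; exact hne he')⟩
      rw [Sym2.eq_iff] at he
      rcases he with ⟨rfl, rfl⟩ | ⟨rfl, rfl⟩
      · exact Or.inl ⟨SimpleGraph.Reachable.refl _, hr.symm⟩
      · exact Or.inr ⟨SimpleGraph.Reachable.refl _, hr.symm⟩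
    · have hadj : (G.deleteEdges {s(a, b)}).Adj u x := by
        rw [SimpleGraph.deleteEdges_adj]
        refine ⟨h, ?_⟩
        simp only [Set.mem_singleton_iff]
        intro hcontra
        exact hnodup.1 (by rwa [hcontra])
      rcases ih hq he with ⟨h1, h2⟩ | ⟨h1, h2⟩
      · exact Or.inl ⟨hadj.reachable.trans h1, h2⟩
      · exact Or.inr ⟨hadj.reachable.trans h1, h2⟩

/-- In a tree, an edge lies on the (unique) path between `u` and `v` iff deleting
it disconnects `u` from `v`. -/
private lemma mem_path_iff {V : Type*} {T : SimpleGraph V} (hT : T.IsTree)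
    {u v : V} (p : T.Walk u v) (hp : p.IsPath) (e : Sym2 V) :
    e ∈ p.edges ↔ ¬ (T.deleteEdges {e}).Reachable u v := by
  constructor
  · intro he hr
    obtain ⟨q'⟩ := hr
    have hsub : ∀ e' ∈ q'.edges, e' ∈ T.edgeSet := fun e' he' =>
      SimpleGraph.edgeSet_mono (T.deleteEdges_le {e}) (q'.edges_subset_edgeSet he')
    set q := q'.transfer T hsub with hqdef
    have hqe : q.edges = q'.edges := q'.edges_transfer hsub
    have henotq : e ∉ q.edges := by
      rw [hqe]
      intro hmem
      have := q'.edges_subset_edgeSet hmem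
      rw [SimpleGraph.edgeSet_deleteEdges] at this
      exact this.2 rfl
    have hmemb : e ∉ q.bypass.edges := fun hmem => henotq (q.edges_bypass_subset hmem)
    have hpath_eq : (⟨p, hp⟩ : T.Path u v) = ⟨q.bypass, q.bypass_isPath⟩ :=
      hT.IsAcyclic.path_unique _ _
    have : p = q.bypass := congrArg Subtype.val hpath_eq
    rw [this] at he
    exact hmemb he
  · intro hr
    by_contra he
    exact hr ⟨p.toDeleteEdges {e} (fun e' he' => by
      simp only [Set.mem_singleton_iff]; rintro rfl; exact he he')⟩

end AuxLemmas

theorem stmt13 (n : ℕ) (T : SimpleGraph (Fin n)) (hT : T.IsTree) :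
    (totalIrr T : ℚ) ≤ (n : ℚ) ^ 2 / 4 * (albertson T : ℚ) := by
  classical
  set w : Sym2 (Fin n) → ℤ := Sym2.lift ⟨fun u v => |(T.degree u : ℤ) - (T.degree v : ℤ)|,
      fun u v => by simp [abs_sub_comm]⟩ with hw
  have hwvals : ∀ x y : Fin n, w s(x, y) = |(T.degree x : ℤ) - (T.degree y : ℤ)| := by
    intro x y; simp [hw]
  have hwnn : ∀ e : Sym2 (Fin n), 0 ≤ w e := by
    intro e
    induction e using Sym2.ind with
    | _ x y => rw [hwvals]; exact abs_nonneg _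
  set P : Finset (Sym2 (Fin n)) := ({e : Sym2 (Fin n) | ¬ e.IsDiag} : Set (Sym2 (Fin n))).toFinset
    with hP
  have htI : totalIrr T = ∑ s ∈ P, w s := by
    rw [totalIrr, hP, hw]
    congr!
  have haI : albertson T = ∑ e ∈ T.edgeFinset, w e := by
    rw [albertson, hw]
  -- the "separation" predicate, well-defined on unordered pairs
  set R : Sym2 (Fin n) → Sym2 (Fin n) → Prop := fun e =>
    Sym2.lift ⟨fun u v => (T.deleteEdges {e}).Reachable u v,
      fun u v => propext ⟨SimpleGraph.Reachable.symm, SimpleGraph.Reachable.symm⟩⟩ with hR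
  have hRvals : ∀ (e : Sym2 (Fin n)) (u v : Fin n),
      R e s(u, v) = (T.deleteEdges {e}).Reachable u v := by intro e u v; simp [hR]
  set E : Sym2 (Fin n) → Finset (Sym2 (Fin n)) :=
    fun s => T.edgeFinset.filter (fun e => ¬ R e s) with hE
  -- Step A : each pair's contribution is bounded by the sum over its path edges
  have stepA : ∀ s ∈ P, w s ≤ ∑ e ∈ E s, w e := by
    intro s hs
    induction s using Sym2.ind with
    | _ u v =>
      obtain ⟨p, hp, -⟩ := hT.existsUnique_path u v
      have h1 : w s(u, v) ≤ (p.edges.map w).sum := by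
        rw [hwvals]
        exact tele_walk _ w hwvals p
      have h2 : (p.edges.map w).sum = ∑ e ∈ p.edges.toFinset, w e :=
        (List.sum_toFinset w hp.isTrail.edges_nodup).symm
      have h3 : p.edges.toFinset ⊆ E s(u, v) := by
        intro e hemem
        rw [List.mem_toFinset] at hemem
        rw [hE, Finset.mem_filter]
        refine ⟨SimpleGraph.mem_edgeFinset.2 (p.edges_subset_edgeSet hemem), ?_⟩
        rw [hRvals]
        exact (mem_path_iff hT p hp e).1 hemem
      calc w s(u, v) ≤ ∑ e ∈ p.edges.toFinset, w e := h2 ▸ h1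
        _ ≤ ∑ e ∈ E s(u, v), w e :=
          Finset.sum_le_sum_of_subset_of_nonneg h3 (fun e _ _ => hwnn e)
  -- Step B : swap the double sum
  have stepB : ∑ s ∈ P, ∑ e ∈ E s, w e
      = ∑ e ∈ T.edgeFinset, ((P.filter (fun s => ¬ R e s)).card : ℤ) * w e := by
    have : ∀ s ∈ P, ∑ e ∈ E s, w e
        = ∑ e ∈ T.edgeFinset, (if ¬ R e s then w e else 0) := by
      intro s _
      rw [hE, Finset.sum_filter]
    rw [Finset.sum_congr rfl this, Finset.sum_comm]
    refine Finset.sum_congr rfl (fun e _ => ?_)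
    rw [← Finset.sum_filter, Finset.sum_const, nsmul_eq_mul]
  -- Step C : each edge separates at most n²/4 pairs
  have stepC : ∀ e ∈ T.edgeFinset,
      (4 : ℤ) * ((P.filter (fun s => ¬ R e s)).card : ℤ) ≤ (n : ℤ) ^ 2 := by
    intro e he
    induction e using Sym2.ind with
    | _ a b =>
      have hadj : T.Adj a b := T.mem_edgeSet.1 (SimpleGraph.mem_edgeFinset.1 he)
      have hbridge : ¬ (T.deleteEdges {s(a, b)}).Reachable a b := by
        have := (SimpleGraph.isAcyclic_iff_forall_adj_isBridge.1 hT.IsAcyclic) hadj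
        exact SimpleGraph.isBridge_iff.1 this
      set S : Finset (Fin n) :=
        Finset.univ.filter (fun x => (T.deleteEdges {s(a, b)}).Reachable a x) with hS
      set Sc : Finset (Fin n) :=
        Finset.univ.filter (fun x => ¬ (T.deleteEdges {s(a, b)}).Reachable a x) with hSc
      have hcard : (P.filter (fun s => ¬ R s(a, b) s)).card ≤ (S ×ˢ Sc).card := by
        apply Finset.card_le_card_of_surjOn (fun q => s(q.1, q.2))
        intro z hz
        simp only [Finset.coe_filter, Set.mem_setOf_eq] at hz
        obtain ⟨hzP, hzR⟩ := hz
        induction z using Sym2.ind with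
        | _ u v =>
          rw [hRvals] at hzR
          obtain ⟨p, hp, -⟩ := hT.existsUnique_path u v
          have hemem : s(a, b) ∈ p.edges := (mem_path_iff hT p hp s(a, b)).2 hzR
          rcases split_walk p hp hemem with ⟨h1, h2⟩ | ⟨h1, h2⟩
          · refine ⟨(u, v), ?_, rfl⟩
            simp only [Finset.coe_product, Set.mem_prod, Finset.mem_coe, hS, hSc,
              Finset.mem_filter, Finset.mem_univ, true_and]
            exact ⟨h1.symm, fun hav => hbridge (hav.trans h2)⟩
          · refine ⟨(v, u), ?_, Sym2.eq_swap⟩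
            simp only [Finset.coe_product, Set.mem_prod, Finset.mem_coe, hS, hSc,
              Finset.mem_filter, Finset.mem_univ, true_and]
            exact ⟨h2.symm, fun hau => hbridge (hau.trans h1)⟩
      have hsplit : S.card + Sc.card = n := by
        rw [hS, hSc]
        rw [Finset.card_filter_add_card_filter_not]
        simp
      have := hcard
      rw [Finset.card_product] at this
      have hle : ((P.filter (fun s => ¬ R s(a, b) s)).card : ℤ) ≤ (S.card : ℤ) * (Sc.card : ℤ) := by
        exact_mod_cast this
      have hn : (S.card : ℤ) + (Sc.card : ℤ) = (n : ℤ) := by exact_mod_cast hsplit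
      nlinarith [sq_nonneg ((S.card : ℤ) - (Sc.card : ℤ)), hle, hn]
  -- Assembly (in ℤ)
  have key : 4 * totalIrr T ≤ (n : ℤ) ^ 2 * albertson T := by
    have h1 : totalIrr T ≤ ∑ s ∈ P, ∑ e ∈ E s, w e := by
      rw [htI]; exact Finset.sum_le_sum stepA
    have h2 : ∑ e ∈ T.edgeFinset, (4 : ℤ) * (((P.filter (fun s => ¬ R e s)).card : ℤ) * w e)
        ≤ ∑ e ∈ T.edgeFinset, (n : ℤ) ^ 2 * w e := by
      refine Finset.sum_le_sum (fun e he => ?_)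
      rw [← mul_assoc]
      exact mul_le_mul_of_nonneg_right (stepC e he) (hwnn e)
    calc 4 * totalIrr T ≤ 4 * ∑ s ∈ P, ∑ e ∈ E s, w e := by linarith
      _ = ∑ e ∈ T.edgeFinset, (4 : ℤ) * (((P.filter (fun s => ¬ R e s)).card : ℤ) * w e) := by
          rw [stepB, Finset.mul_sum]
      _ ≤ ∑ e ∈ T.edgeFinset, (n : ℤ) ^ 2 * w e := h2
      _ = (n : ℤ) ^ 2 * albertson T := by rw [haI, Finset.mul_sum]
  rw [div_mul_eq_mul_div, le_div_iff₀ (by norm_num : (0 : ℚ) < 4)]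
  have hq : ((4 * totalIrr T : ℤ) : ℚ) ≤ (((n : ℤ) ^ 2 * albertson T : ℤ) : ℚ) := by
    exact_mod_cast key
  push_cast at hq ⊢
  linarith
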